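/- For the Bingham graph 𝒜 with parameters τ_y ≥ 0 and ν > 0, there is a constant c > 0 and m ≥ 0 (constant) such that S:D ≥ −m + c(|D|² + |S|²) for every (D,S) ∈ 𝒜; i.e., 𝒜 is a 2-graph. -/
import Mathlib


/-- The Frobenius pairing `A : B = Σ_{ij} A_{ij} B_{ij}`. -/
def frob2 {d : ℕ} (A B : Fin d → Fin d → ℝ) : ℝ := ∑ i, ∑ j, A i j * B i j

/-- The Frobenius norm `|A| = (A:A)^{1/2}`. -/
noncomputable def fnorm {d : ℕ} (A : Fin d → Fin d → ℝ) : ℝ := Real.sqrt (frob2 A A)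

/-- The Bingham graph with yield stress `τy ≥ 0` and viscosity `ν > 0`:
`(D,S) ∈ 𝒜` iff (`|S| ≤ τy` and `D = 0`) or (`D ≠ 0` and `S = τy D/|D| + 2ν D`). -/
def binghamGraph {d : ℕ} (τy ν : ℝ) (D S : Fin d → Fin d → ℝ) : Prop :=
  (fnorm S ≤ τy ∧ D = 0) ∨ (D ≠ 0 ∧ S = (τy / fnorm D) • D + (2 * ν) • D)

lemma frob2_self_nonneg {d : ℕ} (A : Fin d → Fin d → ℝ) : 0 ≤ frob2 A A := by
  apply Finset.sum_nonneg; intro i _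
  apply Finset.sum_nonneg; intro j _
  exact mul_self_nonneg _

lemma fnorm_sq {d : ℕ} (A : Fin d → Fin d → ℝ) : fnorm A ^ 2 = frob2 A A := by
  rw [fnorm, Real.sq_sqrt (frob2_self_nonneg A)]

lemma frob2_self_pos {d : ℕ} {A : Fin d → Fin d → ℝ} (h : A ≠ 0) : 0 < frob2 A A := by
  rcases (frob2_self_nonneg A).lt_or_eq with h' | h'
  · exact h'
  · exfalso; apply h; funext i j
    have h1 := (Finset.sum_eq_zero_iff_of_nonneg (fun i _ =>
      Finset.sum_nonneg (fun j _ => mul_self_nonneg (A i j)))).mp h'.symm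
    have h2 := (Finset.sum_eq_zero_iff_of_nonneg (fun j _ =>
      mul_self_nonneg (A i j))).mp (h1 i (Finset.mem_univ i))
    have := h2 j (Finset.mem_univ j)
    have : A i j = 0 := by nlinarith [this]
    simpa using this

lemma frob2_scale {d : ℕ} (a b : ℝ) (A B : Fin d → Fin d → ℝ) :
    frob2 (fun i j => a * A i j) (fun i j => b * B i j) = (a * b) * frob2 A B := by
  simp only [frob2, Finset.mul_sum]
  refine Finset.sum_congr rfl fun i _ => Finset.sum_congr rfl fun j _ => by ring

/-- The Bingham graph is a 2-graph: there are constants `c > 0` and `m ≥ 0` such that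
`S:D ≥ −m + c(|D|² + |S|²)` for every `(D,S)` in the graph. -/
theorem stmt_9 {d : ℕ} (τy ν : ℝ) (hτy : 0 ≤ τy) (hν : 0 < ν) :
    ∃ c : ℝ, 0 < c ∧ ∃ m : ℝ, 0 ≤ m ∧
      ∀ D S : Fin d → Fin d → ℝ, binghamGraph τy ν D S →
        -m + c * (fnorm D ^ 2 + fnorm S ^ 2) ≤ frob2 S D := by
  set c : ℝ := ν / (1 + 4 * ν ^ 2) with hc
  have hP : (0:ℝ) < 1 + 4 * ν ^ 2 := by positivity
  have hcpos : 0 < c := by positivity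
  have hc1 : c * (1 + 4 * ν ^ 2) = ν := by
    rw [hc]; field_simp
  have h4 : 4 * c * ν ≤ 1 := by
    rw [hc, show (4:ℝ) * (ν / (1 + 4 * ν ^ 2)) * ν = 4 * ν ^ 2 / (1 + 4 * ν ^ 2) by ring,
      div_le_one hP]
    nlinarith
  refine ⟨c, hcpos, c * τy ^ 2, by positivity, ?_⟩
  intro D S hDS
  rcases hDS with ⟨hS, hD⟩ | ⟨hD, hS⟩
  · subst hD
    have h0 : frob2 S (0 : Fin d → Fin d → ℝ) = 0 := by simp [frob2]
    have hf0 : fnorm (0 : Fin d → Fin d → ℝ) = 0 := by simp [fnorm, frob2]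
    rw [h0, hf0]
    have hnn : 0 ≤ fnorm S := Real.sqrt_nonneg _
    have hS2 : fnorm S ^ 2 ≤ τy ^ 2 := by nlinarith
    nlinarith
  · have hDD : 0 < frob2 D D := frob2_self_pos hD
    have hnD : 0 < fnorm D := Real.sqrt_pos.mpr hDD
    set n := fnorm D with hn
    set t := τy / n + 2 * ν with ht
    have htpos : 0 < t := by
      have h0 : 0 ≤ τy / n := div_nonneg hτy hnD.le
      rw [ht]; linarith
    have hS' : S = fun i j => t * D i j := by
      funext i j
      rw [hS]; simp [ht, ← hn]; ring
    have hn2 : n ^ 2 = frob2 D D := fnorm_sq D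
    have hSD : frob2 S D = t * frob2 D D := by
      simp only [hS', frob2, Finset.mul_sum]
      exact Finset.sum_congr rfl fun i _ => Finset.sum_congr rfl fun j _ => by ring
    have hSS : frob2 S S = t ^ 2 * frob2 D D := by
      rw [hS', frob2_scale]; ring
    have hfS : fnorm S = t * n := by
      rw [fnorm, hSS, ← hn2, show t ^ 2 * n ^ 2 = (t * n) ^ 2 by ring,
        Real.sqrt_sq (by positivity)]
    have htn : t * n = τy + 2 * ν * n := by
      rw [ht]; field_simp
    rw [hSD, hfS, ← hn2]
    have key : t * n ^ 2 = (τy + 2 * ν * n) * n := by rw [sq, ← mul_assoc, htn]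
    have h2 : (t * n) ^ 2 = (τy + 2 * ν * n) ^ 2 := by rw [htn]
    rw [show t * n ^ 2 = (τy + 2 * ν * n) * n from key, h2]
    nlinarith [mul_nonneg hτy hnD.le, sq_nonneg n, hc1, h4,
      mul_nonneg (mul_nonneg hτy hnD.le) hcpos.le]
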